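/- Define v_n = Σ_{ν=0}^{n} ((1/4)_ν (3/4)_{n-ν} / (ν! (n-ν)!))^2 for n ≥ 0, where (x)_k denotes the Pochhammer symbol. Then for every integer n ≥ 1, the recurrence 8(n+1)^3 v_{n+1} - (2n+1)(8n^2+8n+5) v_n + 8n^3 v_{n-1} = 0 holds. -/
import Mathlib


open Nat

/-- Pochhammer symbol `(x)_n = x(x+1)⋯(x+n-1)` over the rationals. -/
noncomputable def pochQ (x : ℚ) (n : ℕ) : ℚ := (ascPochhammer ℚ n).eval x

/-- The sequence `v_n`, the right-hand side of identity (7). -/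
noncomputable def v (n : ℕ) : ℚ :=
  ∑ ν ∈ Finset.range (n + 1),
    (pochQ (1 / 4) ν * pochQ (3 / 4) (n - ν) / ((ν ! : ℚ) * ((n - ν)! : ℚ))) ^ 2

/-- The summand of `v`, with the two indices decoupled. -/
noncomputable def t (a b : ℕ) : ℚ :=
  (pochQ (1 / 4) a * pochQ (3 / 4) b / ((a ! : ℚ) * (b ! : ℚ))) ^ 2

lemma pochQ_succ (x : ℚ) (m : ℕ) : pochQ x (m + 1) = pochQ x m * (x + m) := by
  simp [pochQ, ascPochhammer_succ_eval]

lemma pochQ_pos {x : ℚ} (hx : 0 < x) (m : ℕ) : 0 < pochQ x m :=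
  ascPochhammer_pos m x hx

lemma pochQ_ne {x : ℚ} (hx : 0 < x) (m : ℕ) : pochQ x m ≠ 0 :=
  (pochQ_pos hx m).ne'

lemma fact_ne (m : ℕ) : ((m ! : ℚ)) ≠ 0 := by
  exact_mod_cast (Nat.factorial_pos m).ne'

/-- Certificate polynomial `M(n,u) = -4u² + (4n+5)u - (3/2)(n+1)`. -/
noncomputable def Mc (n u : ℚ) : ℚ := -4 * u ^ 2 + (4 * n + 5) * u - 3 / 2 * (n + 1)

/-- The WZ-style per-term telescoping identity, stated with decoupled indices:
for `n = ν + k + 1`. -/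
lemma step (ν k : ℕ) :
    8 * ((ν : ℚ) + k + 2) ^ 3 * t ν (k + 2)
      - (2 * ((ν : ℚ) + k + 1) + 1) *
          (8 * ((ν : ℚ) + k + 1) ^ 2 + 8 * ((ν : ℚ) + k + 1) + 5) * t ν (k + 1)
      + 8 * ((ν : ℚ) + k + 1) ^ 3 * t ν k
    = ((ν : ℚ) + 1) ^ 2 * Mc ((ν : ℚ) + k + 1) ((ν : ℚ) + 1) / ((k : ℚ) + 1) ^ 2
          * t (ν + 1) k
      - (ν : ℚ) ^ 2 * Mc ((ν : ℚ) + k + 1) (ν : ℚ) / ((k : ℚ) + 2) ^ 2 * t ν (k + 1) := by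
  have hP := pochQ_ne (by norm_num : (0:ℚ) < 1/4) ν
  have hQ := pochQ_ne (by norm_num : (0:ℚ) < 3/4) k
  have hA := fact_ne ν
  have hB := fact_ne k
  have hk1 : ((k : ℚ) + 1) ≠ 0 := by positivity
  have hk2 : ((k : ℚ) + 2) ≠ 0 := by positivity
  have hn1 : ((ν : ℚ) + 1) ≠ 0 := by positivity
  simp only [t, Mc, pochQ_succ, Nat.factorial_succ]
  push_cast
  field_simp
  ring

/-- The boundary identity. -/
lemma boundary (n : ℕ) :
    (n : ℚ) ^ 2 * Mc (n : ℚ) (n : ℚ) * t n 0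
      + 8 * ((n : ℚ) + 1) ^ 3 * (t n 1 + t (n + 1) 0)
      - (2 * (n : ℚ) + 1) * (8 * (n : ℚ) ^ 2 + 8 * (n : ℚ) + 5) * t n 0 = 0 := by
  have hP := pochQ_ne (by norm_num : (0:ℚ) < 1/4) n
  have hA := fact_ne n
  have hn1 : ((n : ℚ) + 1) ≠ 0 := by positivity
  have h0 : pochQ (3/4) 0 = 1 := by simp [pochQ]
  have h1 : pochQ (3/4) 1 = 3/4 := by
    rw [show (1:ℕ) = 0 + 1 from rfl, pochQ_succ, h0]; norm_num
  simp only [t, Mc, pochQ_succ, h0, h1, Nat.factorial_succ, Nat.factorial_zero]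
  push_cast
  field_simp
  ring

/-- The recurrence (8) satisfied by `v_n`. -/
theorem v_recurrence (n : ℕ) (hn : 1 ≤ n) :
    8 * ((n : ℚ) + 1) ^ 3 * v (n + 1)
      - (2 * (n : ℚ) + 1) * (8 * (n : ℚ) ^ 2 + 8 * (n : ℚ) + 5) * v n
      + 8 * (n : ℚ) ^ 3 * v (n - 1) = 0 := by
  have hv : ∀ N : ℕ, v N = ∑ ν ∈ Finset.range (N + 1), t ν (N - ν) := by
    intro N; rfl
  -- the telescoping function
  set g : ℕ → ℚ := fun ν =>
    (ν : ℚ) ^ 2 * Mc (n : ℚ) (ν : ℚ) / ((n : ℚ) + 1 - ν) ^ 2 * t ν (n - ν) with hg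
  have key : ∀ ν ∈ Finset.range n,
      8 * ((n : ℚ) + 1) ^ 3 * t ν (n + 1 - ν)
        - (2 * (n : ℚ) + 1) * (8 * (n : ℚ) ^ 2 + 8 * (n : ℚ) + 5) * t ν (n - ν)
        + 8 * (n : ℚ) ^ 3 * t ν (n - 1 - ν)
      = g (ν + 1) - g ν := by
    intro ν hν
    rw [Finset.mem_range] at hν
    obtain ⟨k, hk⟩ : ∃ k, n = ν + k + 1 := ⟨n - 1 - ν, by omega⟩
    have e1 : n + 1 - ν = k + 2 := by omega
    have e2 : n - ν = k + 1 := by omega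
    have e3 : n - 1 - ν = k := by omega
    have e4 : n - (ν + 1) = k := by omega
    have hc : (n : ℚ) = (ν : ℚ) + k + 1 := by rw [hk]; push_cast; ring
    have hc1 : (n : ℚ) + 1 - ((ν : ℚ) + 1) = (k : ℚ) + 1 := by rw [hc]; ring
    have hc2 : (n : ℚ) + 1 - (ν : ℚ) = (k : ℚ) + 2 := by rw [hc]; ring
    rw [e1, e2, e3, hg]
    simp only [e2, e4]
    push_cast
    rw [hc1, hc2, hc]
    linear_combination step ν k
  have tel : ∑ ν ∈ Finset.range n,
      (8 * ((n : ℚ) + 1) ^ 3 * t ν (n + 1 - ν)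
        - (2 * (n : ℚ) + 1) * (8 * (n : ℚ) ^ 2 + 8 * (n : ℚ) + 5) * t ν (n - ν)
        + 8 * (n : ℚ) ^ 3 * t ν (n - 1 - ν)) = g n - g 0 := by
    rw [Finset.sum_congr rfl key, Finset.sum_range_sub]
  have hg0 : g 0 = 0 := by simp [hg]
  have hgn : g n = (n : ℚ) ^ 2 * Mc (n : ℚ) (n : ℚ) * t n 0 := by
    rw [hg]
    simp only [Nat.sub_self]
    have h1 : (n : ℚ) + 1 - (n : ℚ) = 1 := by ring
    rw [h1]
    norm_num
  have ha : n + 1 - n = 1 := by omega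
  have hb : n + 1 - (n + 1) = 0 := by omega
  have hd : n - 1 + 1 = n := by omega
  have hv1 : v (n + 1) = (∑ ν ∈ Finset.range n, t ν (n + 1 - ν)) + t n 1 + t (n + 1) 0 := by
    rw [hv, Finset.sum_range_succ, Finset.sum_range_succ, ha, hb]
  have hv2 : v n = (∑ ν ∈ Finset.range n, t ν (n - ν)) + t n 0 := by
    rw [hv, Finset.sum_range_succ, Nat.sub_self]
  have hv3 : v (n - 1) = ∑ ν ∈ Finset.range n, t ν (n - 1 - ν) := by
    rw [hv, hd]
  rw [hv1, hv2, hv3]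
  have expand :
      8 * ((n : ℚ) + 1) ^ 3 * ((∑ ν ∈ Finset.range n, t ν (n + 1 - ν)) + t n 1 + t (n + 1) 0)
        - (2 * (n : ℚ) + 1) * (8 * (n : ℚ) ^ 2 + 8 * (n : ℚ) + 5) *
            ((∑ ν ∈ Finset.range n, t ν (n - ν)) + t n 0)
        + 8 * (n : ℚ) ^ 3 * ∑ ν ∈ Finset.range n, t ν (n - 1 - ν)
      = (∑ ν ∈ Finset.range n,
          (8 * ((n : ℚ) + 1) ^ 3 * t ν (n + 1 - ν)
            - (2 * (n : ℚ) + 1) * (8 * (n : ℚ) ^ 2 + 8 * (n : ℚ) + 5) * t ν (n - ν)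
            + 8 * (n : ℚ) ^ 3 * t ν (n - 1 - ν)))
        + (8 * ((n : ℚ) + 1) ^ 3 * (t n 1 + t (n + 1) 0)
            - (2 * (n : ℚ) + 1) * (8 * (n : ℚ) ^ 2 + 8 * (n : ℚ) + 5) * t n 0) := by
    simp only [Finset.sum_add_distrib, Finset.sum_sub_distrib, ← Finset.mul_sum]
    ring
  rw [expand, tel, hg0, hgn, sub_zero]
  linear_combination boundary n
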